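/- The limit as m → ∞ of 2^(2m) / (C(2m,m)·√m) equals √π. -/

import Mathlib

open Real Filter Nat

lemma key_eq (m : ℕ) (hm : 1 ≤ m) :
    (2 : ℝ) ^ (2 * m) / (((2 * m).choose m : ℝ) * Real.sqrt m)
      = Stirling.stirlingSeq m ^ 2 / Stirling.stirlingSeq (2 * m) := by
  have hfac : ((2 * m)! : ℝ) = ((2 * m).choose m : ℝ) * (m ! : ℝ) * (m ! : ℝ) := by
    have := Nat.choose_mul_factorial_mul_factorial (Nat.le_mul_of_pos_left m two_pos)
    have h2 : 2 * m - m = m := by omega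
    rw [h2] at this
    exact_mod_cast this.symm
  have hm0 : (0 : ℝ) < m := by exact_mod_cast hm
  have hsm : Real.sqrt m > 0 := Real.sqrt_pos.mpr hm0
  have hsm2 : (Real.sqrt (2 * m)) ^ 2 = 2 * m := Real.sq_sqrt (by positivity)
  have hs4 : Real.sqrt (2 * (2 * m : ℕ)) = 2 * Real.sqrt m := by
    push_cast
    rw [show (2 : ℝ) * (2 * m) = 4 * m by ring, show (4 : ℝ) * m = 2^2 * m by norm_num,
      Real.sqrt_mul (by positivity), Real.sqrt_sq (by norm_num)]
  have hpow : ((2 * m : ℕ) : ℝ) / Real.exp 1 = 2 * ((m : ℝ) / Real.exp 1) := by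
    push_cast; ring
  have hC : (0 : ℝ) < ((2 * m).choose m : ℝ) := by
    exact_mod_cast Nat.choose_pos (Nat.le_mul_of_pos_left m two_pos)
  have hfp : (0 : ℝ) < (m ! : ℝ) := by exact_mod_cast m.factorial_pos
  unfold Stirling.stirlingSeq
  rw [hfac, hpow, hs4]
  have he : (0 : ℝ) < Real.exp 1 := Real.exp_pos 1
  have hme : (0 : ℝ) < (m : ℝ) / Real.exp 1 := by positivity
  have hs2m : (0 : ℝ) < Real.sqrt (2 * m) := Real.sqrt_pos.mpr (by positivity)
  field_simp
  have e1 : (Real.sqrt 2 * Real.sqrt m * (m : ℝ) ^ m) ^ 2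
      = 2 * (m : ℝ) * ((m : ℝ) ^ m) ^ 2 := by
    rw [mul_pow, mul_pow, Real.sq_sqrt (by norm_num : (2:ℝ) ≥ 0), Real.sq_sqrt hm0.le]
  have e2 : Real.sqrt m * Real.sqrt m = (m : ℝ) := Real.mul_self_sqrt hm0.le
  have e3 : Real.exp (2 * (m : ℝ)) = Real.exp m * Real.exp m := by
    rw [two_mul, Real.exp_add]
  rw [hsm2, Real.sq_sqrt hm0.le]
  ring

theorem central_binom_limit :
    Filter.Tendsto
      (fun m : ℕ => (2 : ℝ) ^ (2 * m) / (((2 * m).choose m : ℝ) * Real.sqrt m))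
      Filter.atTop (nhds (Real.sqrt Real.pi)) := by
  have h := Stirling.tendsto_stirlingSeq_sqrt_pi
  have h2 : Tendsto (fun m : ℕ => Stirling.stirlingSeq (2 * m)) atTop (nhds (Real.sqrt π)) :=
    h.comp (tendsto_atTop_atTop_of_monotone (fun a b hab => by omega)
      (fun b => ⟨b, by omega⟩))
  have hπ : Real.sqrt π ≠ 0 := by positivity
  have hmain : Tendsto (fun m : ℕ => Stirling.stirlingSeq m ^ 2 / Stirling.stirlingSeq (2 * m))
      atTop (nhds (Real.sqrt π ^ 2 / Real.sqrt π)) := (h.pow 2).div h2 hπ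
  rw [show Real.sqrt π ^ 2 / Real.sqrt π = Real.sqrt π by field_simp] at hmain
  refine hmain.congr' ?_
  filter_upwards [eventually_ge_atTop 1] with m hm
  exact (key_eq m hm).symm
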